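/- Let c₁, c₂, c₃ be real numbers with c₁ + c₂ + c₃ = c₁·c₂·c₃, and set v = √((c₁²+1)·(c₂²+1)·(c₃²+1)). Then (1 + 2/(c₁²+1) + 2/(c₂²+1) + 2/(c₃²+1))·v − 7 ≥ (13/7)·(v − 1). (Second inequality of Lemma 5.17) -/
import Mathlib


/-- **second inequality of Lemma 5.17.** If `c₁ + c₂ + c₃ = c₁c₂c₃`
and `v = √((c₁²+1)(c₂²+1)(c₃²+1))`, then
`(1 + 2/(c₁²+1) + 2/(c₂²+1) + 2/(c₃²+1))·v − 7 ≥ (13/7)·(v − 1)`. -/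
theorem trace_inv_mul_v_ineq (c₁ c₂ c₃ : ℝ) (h : c₁ + c₂ + c₃ = c₁ * c₂ * c₃)
    (v : ℝ) (hv : v = Real.sqrt ((c₁ ^ 2 + 1) * (c₂ ^ 2 + 1) * (c₃ ^ 2 + 1))) :
    (13 : ℝ) / 7 * (v - 1) ≤
      (1 + 2 / (c₁ ^ 2 + 1) + 2 / (c₂ ^ 2 + 1) + 2 / (c₃ ^ 2 + 1)) * v - 7 := by
  have h1 : (0:ℝ) < c₁ ^ 2 + 1 := by positivity
  have h2 : (0:ℝ) < c₂ ^ 2 + 1 := by positivity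
  have h3 : (0:ℝ) < c₃ ^ 2 + 1 := by positivity
  set t : ℝ := c₁ * c₂ + c₂ * c₃ + c₃ * c₁ - 1 with ht
  have hP : (c₁ ^ 2 + 1) * (c₂ ^ 2 + 1) * (c₃ ^ 2 + 1) = t ^ 2 := by
    rw [ht]; linear_combination (c₁ + c₂ + c₃ - c₁ * c₂ * c₃) * h
  have hS : (c₂ ^ 2 + 1) * (c₃ ^ 2 + 1) + (c₁ ^ 2 + 1) * (c₃ ^ 2 + 1)
      + (c₁ ^ 2 + 1) * (c₂ ^ 2 + 1) = t ^ 2 - 2 * t := by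
    rw [ht]; linear_combination 2 * (c₁ + c₂ + c₃) * h
  -- t² ≥ 1
  have ht1 : 1 ≤ t ^ 2 := by
    rw [← hP]
    nlinarith [sq_nonneg c₁, sq_nonneg c₂, sq_nonneg c₃, sq_nonneg (c₁ * c₂), sq_nonneg (c₂ * c₃), sq_nonneg (c₁ * c₃), sq_nonneg (c₁ * c₂ * c₃)]
  have htne : t ≠ 0 := by intro h0; rw [h0] at ht1; norm_num at ht1
  -- Newton: (t+1)(t-8) ≥ 0
  have hnewton : 0 ≤ (t + 1) * (t - 8) := by
    have hA : 0 ≤ (c₁ + c₂ + c₃) ^ 2 - 3 * (c₁ * c₂ + c₂ * c₃ + c₃ * c₁) := by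
      nlinarith [sq_nonneg (c₁ - c₂), sq_nonneg (c₂ - c₃), sq_nonneg (c₃ - c₁)]
    have hB : 0 ≤ (c₁ * c₂ + c₂ * c₃ + c₃ * c₁) ^ 2 - 3 * (c₁ + c₂ + c₃) ^ 2 := by
      have := h
      nlinarith [sq_nonneg (c₁ * c₂ - c₂ * c₃), sq_nonneg (c₂ * c₃ - c₃ * c₁), sq_nonneg (c₃ * c₁ - c₁ * c₂)]
    nlinarith [hA, hB]
  -- v = |t|
  have hvabs : v = |t| := by
    rw [hv, hP, Real.sqrt_sq_eq_abs]
  set A : ℝ := 1 + 2 / (c₁ ^ 2 + 1) + 2 / (c₂ ^ 2 + 1) + 2 / (c₃ ^ 2 + 1) with hA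
  have hexp : A * ((c₁ ^ 2 + 1) * (c₂ ^ 2 + 1) * (c₃ ^ 2 + 1))
      = (c₁ ^ 2 + 1) * (c₂ ^ 2 + 1) * (c₃ ^ 2 + 1)
        + 2 * ((c₂ ^ 2 + 1) * (c₃ ^ 2 + 1) + (c₁ ^ 2 + 1) * (c₃ ^ 2 + 1)
          + (c₁ ^ 2 + 1) * (c₂ ^ 2 + 1)) := by
    rw [hA]; field_simp; ring
  rw [hP, hS] at hexp
  -- so A * t² = 3t² - 4t, hence A * t = 3t - 4
  have hAt : A * t = 3 * t - 4 := by
    have h' : (A * t) * t = (3 * t - 4) * t := by linear_combination hexp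
    exact mul_right_cancel₀ htne h'
  rcases le_or_gt 0 t with hts | hts
  · have hvt : v = t := by rw [hvabs, abs_of_nonneg hts]
    have ht8 : 8 ≤ t := by nlinarith
    rw [hvt]
    have : A * t - 7 = 3 * t - 11 := by rw [hAt]; ring
    rw [this]; linarith
  · have hvt : v = -t := by rw [hvabs, abs_of_neg hts]
    have htm1 : t ≤ -1 := by nlinarith
    rw [hvt]
    have : A * (-t) - 7 = -(3 * t - 4) - 7 := by rw [← hAt]; ring
    rw [this]; linarith
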